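/- arXiv:2403.11599 — 3 statements merged into one kernel-verified Lean document; each statement's English description precedes it below -/
import Mathlib

section
/- Let α ∈ (0,1), (λ_k) an increasing sequence of positive reals, (a_k) nonnegative with ∑ a_k/λ_k² < ∞. Then as R ↓ 0, ∑_{k=1}^∞ a_k / (R^{2α} + 2 R^α cos(απ) λ_k + λ_k²) = c − 2 cos(απ) c' R^α + O(R^{2α}), where c = ∑ a_k/λ_k² and c' = ∑ a_k/λ_k³. -/
open Real Filter Asymptotics

set_option maxHeartbeats 1000000 in
/-- Auxiliary quantitative estimate for a fixed `x = Rᵅ` with `0 < x ≤ lam 0`. -/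
lemma stmt8_aux (x cs s : ℝ) (hx : 0 < x) (hs : 0 < s)
    (hcs2 : cs ^ 2 = 1 - s ^ 2) (habs : |cs| ≤ 1)
    (lam : ℕ → ℝ) (hpos : ∀ k, 0 < lam k) (hlk : ∀ k, lam 0 ≤ lam k) (hxle : x ≤ lam 0)
    (a : ℕ → ℝ) (ha : ∀ k, 0 ≤ a k)
    (hsum : Summable (fun k => a k / (lam k) ^ 2))
    (c c' : ℝ) (hc : c = ∑' k, a k / (lam k) ^ 2) (hc' : c' = ∑' k, a k / (lam k) ^ 3) :
    |(∑' k, a k / (x ^ 2 + 2 * x * cs * lam k + (lam k) ^ 2)) - (c - 2 * cs * c' * x)|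
      ≤ (5 / (s ^ 2 * (lam 0) ^ 2) * c) * x ^ 2 := by
  have hl0 : 0 < lam 0 := hpos 0
  set K : ℝ := 5 / (s ^ 2 * (lam 0) ^ 2) with hK
  set D : ℕ → ℝ := fun k => x ^ 2 + 2 * x * cs * lam k + (lam k) ^ 2 with hDdef
  have hDk : ∀ k, D k = x ^ 2 + 2 * x * cs * lam k + (lam k) ^ 2 := fun k => rfl
  have hD : ∀ k, s ^ 2 * (lam k) ^ 2 ≤ D k := by
    intro k
    rw [hDk]
    nlinarith [sq_nonneg (x + cs * lam k), sq_nonneg (lam k), hcs2]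
  have hDpos : ∀ k, 0 < D k := by
    intro k
    have h := hpos k
    calc (0:ℝ) < s ^ 2 * (lam k) ^ 2 := by positivity
    _ ≤ _ := hD k
  have hsum3 : Summable (fun k => a k / (lam k) ^ 3) := by
    refine Summable.of_nonneg_of_le
      (fun k => div_nonneg (ha k) (by have := hpos k; positivity))
      (fun k => ?_) (hsum.mul_left (1 / lam 0))
    have hlkp := hpos k
    have h2 : (0:ℝ) < (lam k) ^ 2 * lam 0 := by positivity
    calc a k / (lam k) ^ 3 ≤ a k / ((lam k) ^ 2 * lam 0) := by
          apply div_le_div_of_nonneg_left (ha k) h2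
          nlinarith [hlk k]
      _ = 1 / lam 0 * (a k / (lam k) ^ 2) := by
          rw [one_div, inv_mul_eq_div, div_div, mul_comm ((lam k) ^ 2) (lam 0)]
  have hsumD : Summable (fun k => a k / D k) := by
    refine Summable.of_nonneg_of_le
      (fun k => div_nonneg (ha k) (hDpos k).le)
      (fun k => ?_) (hsum.mul_left (1 / s ^ 2))
    have hlkp := hpos k
    have h2 : (0:ℝ) < s ^ 2 * (lam k) ^ 2 := by positivity
    calc a k / D k ≤ a k / (s ^ 2 * (lam k) ^ 2) :=
          div_le_div_of_nonneg_left (ha k) h2 (hD k)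
      _ = 1 / s ^ 2 * (a k / (lam k) ^ 2) := by field_simp
  set g : ℕ → ℝ := fun k =>
    a k / D k - a k / (lam k) ^ 2 + 2 * cs * x * (a k / (lam k) ^ 3) with hgdef
  have hg : Summable g := (hsumD.sub hsum).add (hsum3.mul_left _)
  -- key pointwise bound
  have key : ∀ k, |g k| ≤ (K * x ^ 2) * (a k / (lam k) ^ 2) := by
    intro k
    have hL : 0 < lam k := hpos k
    have hL0 : lam 0 ≤ lam k := hlk k
    have hcsle := abs_le.mp habs
    have hNle : |(4 * cs ^ 2 - 1) * lam k + 2 * cs * x| ≤ 5 * lam k := by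
      rw [abs_le]
      constructor <;>
        nlinarith [mul_nonneg (sub_nonneg.2 hcsle.2) hx.le,
          mul_nonneg (by linarith [hcsle.1] : (0:ℝ) ≤ 1 + cs) hx.le,
          mul_nonneg (by nlinarith [hcsle.1, hcsle.2] : (0:ℝ) ≤ 1 - cs ^ 2) hL.le,
          hx.le, hxle, hL0]
    have hD0 : D k ≠ 0 := (hDpos k).ne'
    have hL0' : lam k ≠ 0 := hL.ne'
    have hident : g k = (a k * x ^ 2 * ((4 * cs ^ 2 - 1) * lam k + 2 * cs * x))
        / (D k * (lam k) ^ 3) := by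
      rw [hgdef]
      show a k / D k - a k / (lam k) ^ 2 + 2 * cs * x * (a k / (lam k) ^ 3) = _
      rw [hDk] at hD0 ⊢
      rw [div_sub_div _ _ hD0 (pow_ne_zero 2 hL0'), mul_div_assoc',
        div_add_div _ _ (mul_ne_zero hD0 (pow_ne_zero 2 hL0')) (pow_ne_zero 3 hL0'),
        div_eq_div_iff (mul_ne_zero (mul_ne_zero hD0 (pow_ne_zero 2 hL0')) (pow_ne_zero 3 hL0'))
          (mul_ne_zero hD0 (pow_ne_zero 3 hL0'))]
      ring
    have hsD : s ^ 2 * (lam 0) ^ 2 ≤ D k := by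
      refine le_trans ?_ (hD k)
      have h3 : (lam 0) ^ 2 ≤ (lam k) ^ 2 := by nlinarith
      nlinarith [sq_nonneg s]
    have hRHS : (K * x ^ 2) * (a k / (lam k) ^ 2)
        = (5 * x ^ 2 * a k) / (s ^ 2 * (lam 0) ^ 2 * (lam k) ^ 2) := by
      rw [hK]; field_simp; try ring
    have hDL : (0:ℝ) < D k * (lam k) ^ 3 := mul_pos (hDpos k) (by positivity)
    rw [hident, hRHS, abs_div, abs_mul, abs_mul, abs_of_nonneg (ha k),
      abs_of_nonneg (sq_nonneg x), abs_of_pos hDL,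
      div_le_div_iff₀ hDL (by positivity)]
    calc a k * x ^ 2 * |(4 * cs ^ 2 - 1) * lam k + 2 * cs * x| * (s ^ 2 * (lam 0) ^ 2 * (lam k) ^ 2)
        ≤ a k * x ^ 2 * (5 * lam k) * (s ^ 2 * (lam 0) ^ 2 * (lam k) ^ 2) :=
          mul_le_mul_of_nonneg_right
            (mul_le_mul_of_nonneg_left hNle (mul_nonneg (ha k) (sq_nonneg x)))
            (by positivity)
      _ = 5 * x ^ 2 * a k * ((s ^ 2 * (lam 0) ^ 2) * (lam k) ^ 3) := by ring
      _ ≤ 5 * x ^ 2 * a k * (D k * (lam k) ^ 3) := by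
          refine mul_le_mul_of_nonneg_left
            (mul_le_mul_of_nonneg_right hsD (by positivity))
            (mul_nonneg (by positivity) (ha k))
  have habs_sum : Summable (fun k => |g k|) :=
    Summable.of_nonneg_of_le (fun k => abs_nonneg _) key (hsum.mul_left (K * x ^ 2))
  have htg : ∑' k, g k = (∑' k, a k / D k) - c + 2 * cs * x * c' := by
    rw [hgdef]
    rw [Summable.tsum_add (hsumD.sub hsum) (hsum3.mul_left _), Summable.tsum_sub hsumD hsum, tsum_mul_left,
      hc, hc']
  have hEq : (∑' k, a k / (x ^ 2 + 2 * x * cs * lam k + (lam k) ^ 2)) - (c - 2 * cs * c' * x)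
      = ∑' k, g k := by
    have h4 : (∑' k, a k / (x ^ 2 + 2 * x * cs * lam k + (lam k) ^ 2))
        = ∑' k, a k / D k := rfl
    rw [h4, htg]; ring
  rw [hEq]
  have h5 : |∑' k, g k| ≤ ∑' k, |g k| := by
    have := norm_tsum_le_tsum_norm (f := g) (by simpa [Real.norm_eq_abs] using habs_sum)
    simpa [Real.norm_eq_abs] using this
  calc |∑' k, g k| ≤ ∑' k, |g k| := h5
    _ ≤ ∑' k, (K * x ^ 2) * (a k / (lam k) ^ 2) :=
        Summable.tsum_le_tsum key habs_sum (hsum.mul_left _)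
    _ = (K * x ^ 2) * c := by rw [tsum_mul_left, hc]
    _ = (K * c) * x ^ 2 := by ring

/-- With `α ∈ (0,1)`, `(λ k)` increasing positive, `(a k)` nonnegative and
`∑ a k / λ k ² < ∞`, as `R ↓ 0` we have
`∑ₖ a k / (R^{2α} + 2 Rᵅ cos(απ) λ k + λ k ²) = c − 2 cos(απ) c' Rᵅ + O(R^{2α})`,
where `c = ∑ a k / λ k ²` and `c' = ∑ a k / λ k ³`. -/
theorem stmt8 (α : ℝ) (hα : α ∈ Set.Ioo (0:ℝ) 1)
    (lam : ℕ → ℝ) (hpos : ∀ k, 0 < lam k) (hmono : StrictMono lam)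
    (a : ℕ → ℝ) (ha : ∀ k, 0 ≤ a k)
    (hsum : Summable (fun k => a k / (lam k) ^ 2))
    (c c' : ℝ) (hc : c = ∑' k, a k / (lam k) ^ 2) (hc' : c' = ∑' k, a k / (lam k) ^ 3) :
    (fun R : ℝ =>
        (∑' k, a k / (R ^ (2 * α) + 2 * R ^ α * Real.cos (α * π) * lam k + (lam k) ^ 2))
          - (c - 2 * Real.cos (α * π) * c' * R ^ α))
      =O[nhdsWithin 0 (Set.Ioi 0)] (fun R : ℝ => R ^ (2 * α)) := by
  obtain ⟨hα0, hα1⟩ := hα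
  have hπ := Real.pi_pos
  have hs : 0 < Real.sin (α * π) :=
    Real.sin_pos_of_pos_of_lt_pi (by positivity) (by nlinarith)
  have hcs2 : Real.cos (α * π) ^ 2 = 1 - Real.sin (α * π) ^ 2 := by
    nlinarith [Real.sin_sq_add_cos_sq (α * π)]
  have habs : |Real.cos (α * π)| ≤ 1 := Real.abs_cos_le_one _
  have hl0 : 0 < lam 0 := hpos 0
  have hlk : ∀ k, lam 0 ≤ lam k := fun k => hmono.monotone (Nat.zero_le k)
  rw [isBigO_iff]
  refine ⟨5 / (Real.sin (α * π) ^ 2 * (lam 0) ^ 2) * c, ?_⟩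
  filter_upwards [Ioo_mem_nhdsGT
    (show (0:ℝ) < (lam 0) ^ (α⁻¹) by positivity)] with R hR
  have hRpos : 0 < R := hR.1
  have hx : 0 < R ^ α := Real.rpow_pos_of_pos hRpos α
  have hxle : R ^ α ≤ lam 0 := by
    have h1 : R ^ α ≤ ((lam 0) ^ (α⁻¹)) ^ α :=
      (Real.rpow_lt_rpow hRpos.le hR.2 hα0).le
    rwa [← Real.rpow_mul hl0.le, inv_mul_cancel₀ hα0.ne', Real.rpow_one] at h1
  have hx2 : R ^ (2 * α) = (R ^ α) ^ 2 := by
    rw [two_mul, Real.rpow_add hRpos, sq]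
  rw [Real.norm_eq_abs, Real.norm_eq_abs, hx2,
    abs_of_nonneg (by positivity : (0:ℝ) ≤ (R ^ α) ^ 2)]
  exact stmt8_aux (R ^ α) (Real.cos (α * π)) (Real.sin (α * π)) hx hs hcs2 habs
    lam hpos hlk hxle a ha hsum c c' hc hc'
end

section
/- Let α ∈ (0,1), and for j = 1,2 let (λ_{j,k})_{k≥1} be strictly increasing sequences of positive reals and (a_{j,k}) sequences of positive reals with ∑_k a_{j,k}/λ_{j,k}² < ∞. Suppose that for all z outside the poles, ∑_k a_{1,k} / ((z e^{iαπ} + λ_{1,k})(z e^{-iαπ} + λ_{1,k})) = ∑_k a_{2,k} / ((z e^{iαπ} + λ_{2,k})(z e^{-iαπ} + λ_{2,k})). Then λ_{1,k} = λ_{2,k} and a_{1,k} = a_{2,k} for all k. -/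
open Real Complex Filter Topology

set_option maxHeartbeats 1000000

noncomputable def ww (θ : ℝ) : ℂ := Complex.exp ((-θ : ℝ) * Complex.I)

noncomputable def term (θ : ℝ) (L a s : ℝ) : ℂ :=
  (a : ℂ) / (((L : ℂ) - s) * ((L : ℂ) - s * ww θ))

lemma ww_re (θ : ℝ) : (ww θ).re = Real.cos θ := by
  rw [ww, Complex.exp_ofReal_mul_I_re, Real.cos_neg]

lemma ww_ne_one {θ : ℝ} (hθ : Real.cos θ < 1) : ww θ ≠ 1 := by
  intro h
  rw [← ww_re θ, h] at hθ
  simp at hθ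

lemma abs_den2_ge (θ : ℝ) {L s : ℝ} (hs : 0 ≤ s) :
    L - s ≤ ‖(L : ℂ) - s * ww θ‖ := by
  have hre : ((L : ℂ) - s * ww θ).re = L - s * Real.cos θ := by
    simp [ww_re]
  have h1 : L - s ≤ ((L : ℂ) - s * ww θ).re := by
    rw [hre]; nlinarith [Real.cos_le_one θ]
  exact h1.trans ((le_abs_self _).trans (Complex.abs_re_le_norm _))

lemma den_lb {L0 L s : ℝ} (h0 : 0 < s) (hs : s < L0) (hk : L0 ≤ L) :
    min (1/2 : ℝ) ((L0 - s)/(2*s)) * L ≤ L - s := by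
  have hL : 0 < L := h0.trans (hs.trans_le hk)
  rcases le_or_gt (2*s) L with h | h
  · have := mul_le_mul_of_nonneg_right (min_le_left (1/2 : ℝ) ((L0 - s)/(2*s))) hL.le
    linarith
  · have h2 := mul_le_mul_of_nonneg_right (min_le_right (1/2 : ℝ) ((L0 - s)/(2*s))) hL.le
    have h3 : (L0 - s)/(2*s) * L ≤ L0 - s := by
      rw [div_mul_eq_mul_div, div_le_iff₀ (by linarith)]
      nlinarith
    linarith

lemma c_pos {L0 s : ℝ} (h0 : 0 < s) (hs : s < L0) :
    0 < min (1/2 : ℝ) ((L0 - s)/(2*s)) :=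
  lt_min (by norm_num) (div_pos (by linarith) (by linarith))

lemma c_mono {L0 s μ : ℝ} (h0 : 0 < s) (hsμ : s < μ) (hμ : μ < L0) :
    min (1/2 : ℝ) ((L0 - μ)/(2*μ)) ≤ min (1/2 : ℝ) ((L0 - s)/(2*s)) := by
  refine min_le_min le_rfl ?_
  apply div_le_div₀ (by linarith) (by linarith) (by linarith) (by linarith)

lemma term_norm_le {θ L0 L s a c : ℝ} (h0 : 0 < s) (hs : s < L0) (hk : L0 ≤ L)
    (ha : 0 ≤ a) (hc : 0 < c) (hcle : c * L ≤ L - s) :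
    ‖term θ L a s‖ ≤ (a / L ^ 2) / c ^ 2 := by
  have hL : 0 < L := h0.trans (hs.trans_le hk)
  have hcL : 0 < c * L := mul_pos hc hL
  have h1 : ‖(L : ℂ) - (s : ℂ)‖ = L - s := by
    rw [show ((L : ℂ) - (s : ℂ)) = ((L - s : ℝ) : ℂ) by push_cast; ring,
      Complex.norm_real, Real.norm_eq_abs, abs_of_pos (by linarith)]
  have h2 := abs_den2_ge θ (L := L) h0.le
  have hnorm : ‖term θ L a s‖ = a / (‖(L:ℂ) - s‖ * ‖(L:ℂ) - s * ww θ‖) := by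
    rw [term]
    rw [norm_div, norm_mul]
    simp only [Complex.norm_real, Real.norm_eq_abs, _root_.abs_of_nonneg ha]
  rw [hnorm]
  have key : (c*L) * (c*L) ≤ ‖(L:ℂ) - s‖ * ‖(L:ℂ) - s * ww θ‖ := by
    rw [h1]
    exact mul_le_mul hcle (hcle.trans h2) hcL.le (by linarith)
  calc a / (‖(L:ℂ) - s‖ * ‖(L:ℂ) - s * ww θ‖) ≤ a / ((c*L)*(c*L)) := by
        gcongr
      _ = (a / L ^ 2) / c ^ 2 := by
        rw [div_div]
        congr 1
        ring

lemma summable_term {θ : ℝ} {lam a : ℕ → ℝ} (hm : ∀ k, lam 0 ≤ lam k)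
    (ha : ∀ k, 0 ≤ a k) (hsum : Summable (fun k => a k / lam k ^ 2))
    {s : ℝ} (h0 : 0 < s) (hs : s < lam 0) :
    Summable (fun k => term θ (lam k) (a k) s) := by
  set c := min (1/2 : ℝ) ((lam 0 - s)/(2*s)) with hc
  have hcpos := c_pos h0 hs
  apply Summable.of_norm
  apply Summable.of_nonneg_of_le (fun k => norm_nonneg _)
    (fun k => term_norm_le h0 hs (hm k) (ha k) hcpos (den_lb h0 hs (hm k)))
  exact hsum.div_const _

lemma tendsto_zero_aux {θ : ℝ} {lam a : ℕ → ℝ}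
    (hm : ∀ k, lam 0 ≤ lam k) (ha : ∀ k, 0 ≤ a k)
    (hsum : Summable (fun k => a k / lam k ^ 2)) {μ : ℝ} (hμ : 0 < μ) (hlt : μ < lam 0) :
    Tendsto (fun s : ℝ => ((μ:ℂ) - s) * ∑' k, term θ (lam k) (a k) s)
      (𝓝[<] μ) (𝓝 0) := by
  set c := min (1/2 : ℝ) ((lam 0 - μ)/(2*μ)) with hc
  have hcpos := c_pos hμ hlt
  have hmain : Tendsto (fun s : ℝ => ∑' k, (((μ:ℂ) - s) * term θ (lam k) (a k) s))
      (𝓝[<] μ) (𝓝 (∑' _ : ℕ, (0:ℂ))) := by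
    apply tendsto_tsum_of_dominated_convergence
      (bound := fun k => μ * ((a k / lam k ^ 2) / c ^ 2))
    · exact ((hsum.div_const _).mul_left _)
    · intro k
      have h1 : Tendsto (fun s : ℝ => ((μ:ℂ) - (s:ℂ))) (𝓝[<] μ) (𝓝 0) := by
        have hco : Continuous (fun s : ℝ => ((μ:ℂ) - (s:ℂ))) := by fun_prop
        have := (hco.tendsto μ).mono_left (nhdsWithin_le_nhds (s := Set.Iio μ))
        simpa using this
      have hklt : μ < lam k := lt_of_lt_of_le hlt (hm k)
      have hd1 : ((lam k : ℂ) - (μ:ℂ)) ≠ 0 := by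
        rw [show ((lam k:ℂ) - (μ:ℂ)) = ((lam k - μ : ℝ):ℂ) by push_cast; ring]
        exact_mod_cast sub_ne_zero.mpr (ne_of_gt hklt)
      have hd2 : ((lam k : ℂ) - (μ:ℂ) * ww θ) ≠ 0 := by
        intro h
        have h2 := abs_den2_ge θ (L := lam k) (s := μ) hμ.le
        rw [h, norm_zero] at h2
        linarith
      have h2 : Tendsto (fun s : ℝ => term θ (lam k) (a k) s) (𝓝[<] μ)
          (𝓝 (term θ (lam k) (a k) μ)) := by
        apply Tendsto.mono_left _ (nhdsWithin_le_nhds (s := Set.Iio μ))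
        apply ContinuousAt.tendsto
        unfold term
        apply ContinuousAt.div continuousAt_const
        · fun_prop
        · exact mul_ne_zero hd1 hd2
      simpa using h1.mul h2
    · filter_upwards [Ioo_mem_nhdsLT (half_lt_self hμ)] with s hs
      intro k
      have h0s : 0 < s := lt_trans (half_pos hμ) hs.1
      have hsμ : s < μ := hs.2
      have hslam : s < lam 0 := hsμ.trans hlt
      have hcc : c ≤ min (1/2 : ℝ) ((lam 0 - s)/(2*s)) := c_mono h0s hsμ hlt
      have hlamk : (0:ℝ) ≤ lam k := le_trans (by linarith) (hm k)
      have hbd := term_norm_le (θ := θ) (a := a k) (c := c) h0s hslam (hm k) (ha k) hcpos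
        (le_trans (mul_le_mul_of_nonneg_right hcc hlamk) (den_lb h0s hslam (hm k)))
      rw [norm_mul]
      have hms : ‖((μ:ℂ) - (s:ℂ))‖ = μ - s := by
        rw [show ((μ:ℂ) - (s:ℂ)) = ((μ - s : ℝ):ℂ) by push_cast; ring,
          Complex.norm_real, Real.norm_eq_abs]
        exact _root_.abs_of_pos (by linarith)
      rw [hms]
      have hnn : (0:ℝ) ≤ (a k / lam k ^ 2) / c ^ 2 := div_nonneg (div_nonneg (ha k) (sq_nonneg _)) (sq_nonneg _)
      exact mul_le_mul (by linarith) hbd (norm_nonneg _) hμ.le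
  rw [tsum_zero] at hmain
  exact hmain.congr (fun s => tsum_mul_left)

lemma key_tendsto {θ : ℝ} (hθ : Real.cos θ < 1) {lam a : ℕ → ℝ}
    (hmono : StrictMono lam) (ha : ∀ k, 0 ≤ a k)
    (hsum : Summable (fun k => a k / lam k ^ 2)) {μ : ℝ} (hμ : 0 < μ) (hle : μ ≤ lam 0) :
    Tendsto (fun s : ℝ => ((μ:ℂ) - s) * ∑' k, term θ (lam k) (a k) s) (𝓝[<] μ)
      (𝓝 (if lam 0 = μ then (a 0 : ℂ) / (μ * (1 - ww θ)) else 0)) := by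
  have hm : ∀ k, lam 0 ≤ lam k := fun k => hmono.monotone (Nat.zero_le k)
  by_cases h : lam 0 = μ
  · rw [if_pos h]
    -- shifted sequence
    have hm' : ∀ k, lam 1 ≤ lam (k + 1) := fun k =>
      hmono.monotone (Nat.succ_le_succ (Nat.zero_le k))
    have hsum' : Summable (fun k => a (k+1) / lam (k+1) ^ 2) :=
      (summable_nat_add_iff (f := fun k => a k / lam k ^ 2) 1).mpr hsum
    have hlt1 : μ < lam 1 := h ▸ hmono Nat.zero_lt_one
    have Zt := tendsto_zero_aux (θ := θ) (lam := fun k => lam (k+1)) (a := fun k => a (k+1))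
      hm' (fun k => ha _) hsum' hμ hlt1
    have hden : (μ:ℂ) * (1 - ww θ) ≠ 0 := by
      apply mul_ne_zero
      · exact_mod_cast hμ.ne'
      · exact sub_ne_zero.mpr (Ne.symm (ww_ne_one hθ))
    have hres : Tendsto (fun s : ℝ => (a 0 : ℂ) / ((μ:ℂ) - (s:ℂ) * ww θ)) (𝓝[<] μ)
        (𝓝 ((a 0 : ℂ) / (μ * (1 - ww θ)))) := by
      have hco : Tendsto (fun s : ℝ => ((μ:ℂ) - (s:ℂ) * ww θ)) (𝓝 μ)
          (𝓝 ((μ:ℂ) - (μ:ℂ) * ww θ)) := by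
        exact (Continuous.tendsto (by fun_prop) μ)
      have := (tendsto_const_nhds (x := (a 0 : ℂ))).div (hco.mono_left
        (nhdsWithin_le_nhds (s := Set.Iio μ))) (by rw [← mul_one_sub]; exact hden)
      rw [← mul_one_sub] at this
      exact this
    have hEq : ∀ᶠ (s : ℝ) in 𝓝[<] μ, (a 0 : ℂ) / ((μ:ℂ) - (s:ℂ) * ww θ)
        + ((μ:ℂ) - s) * ∑' k, term θ (lam (k+1)) (a (k+1)) s
        = ((μ:ℂ) - s) * ∑' k, term θ (lam k) (a k) s := by
      filter_upwards [Ioo_mem_nhdsLT (half_lt_self hμ)] with s hs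
      have h0s : 0 < s := lt_trans (half_pos hμ) hs.1
      have hsμ : s < μ := hs.2
      have hsummable := summable_term (θ := θ) hm ha hsum h0s (hsμ.trans_le hle)
      rw [Summable.tsum_eq_zero_add hsummable]
      have hx : ((μ:ℂ) - (s:ℂ)) ≠ 0 := by
        rw [show ((μ:ℂ) - (s:ℂ)) = ((μ - s : ℝ):ℂ) by push_cast; ring]
        exact_mod_cast (by intro hz; exact absurd hsμ (by linarith) : μ - s ≠ 0)
      have hy : ((μ:ℂ) - (s:ℂ) * ww θ) ≠ 0 := by
        intro hzero
        have h2 := abs_den2_ge θ (L := μ) (s := s) h0s.le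
        rw [hzero, norm_zero] at h2
        linarith
      rw [mul_add]
      congr 1
      rw [term, h]
      field_simp
    refine Tendsto.congr' hEq ?_
    simpa using hres.add Zt
  · rw [if_neg h]
    exact tendsto_zero_aux hm ha hsum hμ (lt_of_le_of_ne hle (Ne.symm h))

lemma neA (x : ℂ) {s t : ℝ} (h : s ≠ t) :
    -(s:ℂ) * Complex.exp x ≠ -(t:ℂ) * Complex.exp x := by
  intro he
  have h2 := mul_right_cancel₀ (Complex.exp_ne_zero x) he
  rw [neg_inj] at h2
  exact h (by exact_mod_cast h2)

lemma neB {s t c : ℝ} (hs : 0 < s) (ht : 0 < t) (hsin : 0 < Real.sin c) :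
    -(s:ℂ) * Complex.exp (-(c:ℂ) * Complex.I) ≠ -(t:ℂ) * Complex.exp ((c:ℂ) * Complex.I) := by
  intro he
  have h2 := congrArg Complex.im he
  have e1 : (-(c:ℂ) * Complex.I) = ((-c : ℝ):ℂ) * Complex.I := by push_cast; ring
  rw [e1] at h2
  simp only [Complex.neg_im, Complex.mul_im, Complex.ofReal_re, Complex.ofReal_im,
    Complex.exp_ofReal_mul_I_im, Complex.exp_ofReal_mul_I_re, Real.sin_neg,
    Complex.neg_re] at h2
  nlinarith [h2]

lemma z_fact1 (s c L : ℝ) :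
    (-(s:ℂ) * Complex.exp (-(c:ℂ) * Complex.I)) * Complex.exp ((c:ℂ) * Complex.I) + (L:ℂ)
      = (L:ℂ) - (s:ℂ) := by
  have h : (-(c:ℂ) * Complex.I + (c:ℂ) * Complex.I) = 0 := by ring
  rw [mul_assoc, ← Complex.exp_add, h, Complex.exp_zero, mul_one]
  ring

lemma z_fact2 (s c L : ℝ) :
    (-(s:ℂ) * Complex.exp (-(c:ℂ) * Complex.I)) * Complex.exp (-(c:ℂ) * Complex.I) + (L:ℂ)
      = (L:ℂ) - (s:ℂ) * ww (2*c) := by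
  have h : (-(c:ℂ) * Complex.I + -(c:ℂ) * Complex.I) = ((-(2*c) : ℝ):ℂ) * Complex.I := by
    push_cast; ring
  rw [mul_assoc, ← Complex.exp_add, h, ww]
  ring

/-- Let `α ∈ (0,1)` and for `j = 1,2` let `(λ_{j,k})` be strictly
increasing positive sequences and `(a_{j,k})` positive with `∑ a_{j,k}/λ_{j,k}² < ∞`.
If for all `z` outside the poles `-λ_{j,k} e^{∓iαπ}`,
`∑ₖ a_{1,k}/((z e^{iαπ}+λ_{1,k})(z e^{-iαπ}+λ_{1,k})) =
 ∑ₖ a_{2,k}/((z e^{iαπ}+λ_{2,k})(z e^{-iαπ}+λ_{2,k}))`, then the sequences coincide. -/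
theorem stmt10 (α : ℝ) (hα : α ∈ Set.Ioo (0:ℝ) 1)
    (lam₁ lam₂ : ℕ → ℝ) (hpos₁ : ∀ k, 0 < lam₁ k) (hpos₂ : ∀ k, 0 < lam₂ k)
    (hmono₁ : StrictMono lam₁) (hmono₂ : StrictMono lam₂)
    (a₁ a₂ : ℕ → ℝ) (ha₁ : ∀ k, 0 < a₁ k) (ha₂ : ∀ k, 0 < a₂ k)
    (hsum₁ : Summable (fun k => a₁ k / (lam₁ k) ^ 2))
    (hsum₂ : Summable (fun k => a₂ k / (lam₂ k) ^ 2))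
    (heq : ∀ z : ℂ,
      (∀ k, z ≠ -(lam₁ k : ℂ) * Complex.exp (-(α * π : ℝ) * Complex.I)
          ∧ z ≠ -(lam₁ k : ℂ) * Complex.exp ((α * π : ℝ) * Complex.I)
          ∧ z ≠ -(lam₂ k : ℂ) * Complex.exp (-(α * π : ℝ) * Complex.I)
          ∧ z ≠ -(lam₂ k : ℂ) * Complex.exp ((α * π : ℝ) * Complex.I)) →
      (∑' k, (a₁ k : ℂ) /
          ((z * Complex.exp ((α * π : ℝ) * Complex.I) + (lam₁ k : ℂ)) *
           (z * Complex.exp (-(α * π : ℝ) * Complex.I) + (lam₁ k : ℂ))))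
        = ∑' k, (a₂ k : ℂ) /
          ((z * Complex.exp ((α * π : ℝ) * Complex.I) + (lam₂ k : ℂ)) *
           (z * Complex.exp (-(α * π : ℝ) * Complex.I) + (lam₂ k : ℂ)))) :
    (∀ k, lam₁ k = lam₂ k) ∧ (∀ k, a₁ k = a₂ k) := by
  obtain ⟨hα0, hα1⟩ := hα
  have hπ := Real.pi_pos
  set c := α * π with hcdef
  have hc0 : 0 < c := mul_pos hα0 hπ
  have hcπ : c < π := by rw [hcdef]; nlinarith
  have hsin : 0 < Real.sin c := Real.sin_pos_of_pos_of_lt_pi hc0 hcπ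
  set θ := 2 * c with hθdef
  have hθcos : Real.cos θ < 1 := by
    rcases lt_or_eq_of_le (Real.cos_le_one θ) with h | h
    · exact h
    · exfalso
      rw [Real.cos_eq_one_iff_of_lt_of_lt (by nlinarith) (by nlinarith)] at h
      nlinarith
  have main : ∀ n, lam₁ n = lam₂ n ∧ a₁ n = a₂ n := by
    intro n
    induction n using Nat.strong_induction_on with
    | _ n IH =>
    set μ := min (lam₁ n) (lam₂ n) with hμdef
    have hμpos : 0 < μ := lt_min (hpos₁ n) (hpos₂ n)
    have hμ1 : μ ≤ lam₁ n := min_le_left _ _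
    have hμ2 : μ ≤ lam₂ n := min_le_right _ _
    have hLex : ∃ L, L < μ ∧ 0 ≤ L ∧ ∀ k < n, lam₁ k ≤ L ∧ lam₂ k ≤ L := by
      cases n with
      | zero => exact ⟨0, hμpos, le_refl 0, fun k hk => absurd hk (Nat.not_lt_zero k)⟩
      | succ m =>
        refine ⟨lam₁ m, ?_, (hpos₁ m).le, ?_⟩
        · apply lt_min (hmono₁ (Nat.lt_succ_self m))
          rw [(IH m (Nat.lt_succ_self m)).1]
          exact hmono₂ (Nat.lt_succ_self m)
        · intro k hk
          have hk' : k ≤ m := Nat.lt_succ_iff.mp hk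
          refine ⟨hmono₁.monotone hk', ?_⟩
          rw [← (IH k hk).1]
          exact hmono₁.monotone hk'
    obtain ⟨L, hLμ, hL0, hLk⟩ := hLex
    have hm₁' : ∀ k, lam₁ (0 + n) ≤ lam₁ (k + n) := fun k =>
      hmono₁.monotone (by omega)
    have hm₂' : ∀ k, lam₂ (0 + n) ≤ lam₂ (k + n) := fun k =>
      hmono₂.monotone (by omega)
    have hsum₁' : Summable (fun k => a₁ (k + n) / lam₁ (k + n) ^ 2) :=
      (summable_nat_add_iff (f := fun k => a₁ k / lam₁ k ^ 2) n).mpr hsum₁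
    have hsum₂' : Summable (fun k => a₂ (k + n) / lam₂ (k + n) ^ 2) :=
      (summable_nat_add_iff (f := fun k => a₂ k / lam₂ k ^ 2) n).mpr hsum₂
    have hEv : ∀ᶠ (s : ℝ) in 𝓝[<] μ,
        ((μ:ℂ) - s) * ∑' k, term θ (lam₁ (k + n)) (a₁ (k + n)) s
        = ((μ:ℂ) - s) * ∑' k, term θ (lam₂ (k + n)) (a₂ (k + n)) s := by
      filter_upwards [Ioo_mem_nhdsLT (max_lt hLμ (half_lt_self hμpos))] with s hs
      have h0s : 0 < s := lt_of_le_of_lt (le_trans (half_pos hμpos).le (le_max_right L (μ/2))) hs.1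
      have hsμ : s < μ := hs.2
      have hsL : L < s := lt_of_le_of_lt (le_max_left _ _) hs.1
      have hs_ne1 : ∀ k, s ≠ lam₁ k := by
        intro k
        rcases lt_or_ge k n with hk | hk
        · have := (hLk k hk).1; intro he; rw [he] at hsL; linarith
        · have h1 : μ ≤ lam₁ k := le_trans hμ1 (hmono₁.monotone hk)
          intro he; rw [he] at hsμ; linarith
      have hs_ne2 : ∀ k, s ≠ lam₂ k := by
        intro k
        rcases lt_or_ge k n with hk | hk
        · have := (hLk k hk).2; intro he; rw [he] at hsL; linarith
        · have h1 : μ ≤ lam₂ k := le_trans hμ2 (hmono₂.monotone hk)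
          intro he; rw [he] at hsμ; linarith
      have hz := heq (-(s:ℂ) * Complex.exp (-(c:ℂ) * Complex.I))
        (fun k => ⟨neA _ (hs_ne1 k), neB h0s (hpos₁ k) hsin,
          neA _ (hs_ne2 k), neB h0s (hpos₂ k) hsin⟩)
      have ht1 : (∑' k, (a₁ k : ℂ) /
          (((-(s:ℂ) * Complex.exp (-(c:ℂ) * Complex.I)) * Complex.exp ((c:ℂ) * Complex.I) + (lam₁ k : ℂ)) *
           ((-(s:ℂ) * Complex.exp (-(c:ℂ) * Complex.I)) * Complex.exp (-(c:ℂ) * Complex.I) + (lam₁ k : ℂ))))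
          = ∑' k, term θ (lam₁ k) (a₁ k) s :=
        tsum_congr (fun k => by rw [z_fact1, z_fact2, hθdef, term])
      have ht2 : (∑' k, (a₂ k : ℂ) /
          (((-(s:ℂ) * Complex.exp (-(c:ℂ) * Complex.I)) * Complex.exp ((c:ℂ) * Complex.I) + (lam₂ k : ℂ)) *
           ((-(s:ℂ) * Complex.exp (-(c:ℂ) * Complex.I)) * Complex.exp (-(c:ℂ) * Complex.I) + (lam₂ k : ℂ))))
          = ∑' k, term θ (lam₂ k) (a₂ k) s :=
        tsum_congr (fun k => by rw [z_fact1, z_fact2, hθdef, term])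
      rw [ht1, ht2] at hz
      have hS1 : Summable (fun k => term θ (lam₁ (k + n)) (a₁ (k + n)) s) := by
        apply summable_term hm₁' (fun k => (ha₁ _).le) hsum₁' h0s
        rw [zero_add]; exact hsμ.trans_le hμ1
      have hS2 : Summable (fun k => term θ (lam₂ (k + n)) (a₂ (k + n)) s) := by
        apply summable_term hm₂' (fun k => (ha₂ _).le) hsum₂' h0s
        rw [zero_add]; exact hsμ.trans_le hμ2
      have hS1full : Summable (fun k => term θ (lam₁ k) (a₁ k) s) :=
        (summable_nat_add_iff (f := fun k => term θ (lam₁ k) (a₁ k) s) n).mp hS1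
      have hS2full : Summable (fun k => term θ (lam₂ k) (a₂ k) s) :=
        (summable_nat_add_iff (f := fun k => term θ (lam₂ k) (a₂ k) s) n).mp hS2
      have hfin : ∑ i ∈ Finset.range n, term θ (lam₁ i) (a₁ i) s
          = ∑ i ∈ Finset.range n, term θ (lam₂ i) (a₂ i) s :=
        Finset.sum_congr rfl (fun i hi => by
          rw [(IH i (Finset.mem_range.mp hi)).1, (IH i (Finset.mem_range.mp hi)).2])
      have e1 := Summable.sum_add_tsum_nat_add n hS1full
      have e2 := Summable.sum_add_tsum_nat_add n hS2full
      have htails : (∑' k, term θ (lam₁ (k + n)) (a₁ (k + n)) s)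
          = ∑' k, term θ (lam₂ (k + n)) (a₂ (k + n)) s := by
        have h3 : ∑ i ∈ Finset.range n, term θ (lam₁ i) (a₁ i) s
            + ∑' k, term θ (lam₁ (k + n)) (a₁ (k + n)) s
            = ∑ i ∈ Finset.range n, term θ (lam₁ i) (a₁ i) s
            + ∑' k, term θ (lam₂ (k + n)) (a₂ (k + n)) s := by
          rw [e1, hz, ← e2, hfin]
        exact add_left_cancel h3
      rw [htails]
    have K1 := key_tendsto (θ := θ) hθcos (lam := fun k => lam₁ (k + n)) (a := fun k => a₁ (k + n))
      (hmono₁.comp (strictMono_id.add_const n)) (fun k => (ha₁ _).le) hsum₁' hμpos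
      (by simpa using hμ1)
    have K2 := key_tendsto (θ := θ) hθcos (lam := fun k => lam₂ (k + n)) (a := fun k => a₂ (k + n))
      (hmono₂.comp (strictMono_id.add_const n)) (fun k => (ha₂ _).le) hsum₂' hμpos
      (by simpa using hμ2)
    have hEqLim := tendsto_nhds_unique (K1.congr' hEv) K2
    simp only [zero_add] at hEqLim
    have hden : (μ:ℂ) * (1 - ww θ) ≠ 0 :=
      mul_ne_zero (by exact_mod_cast hμpos.ne') (sub_ne_zero.mpr (Ne.symm (ww_ne_one hθcos)))
    have hne : ∀ b : ℝ, 0 < b → (b:ℂ) / ((μ:ℂ) * (1 - ww θ)) ≠ 0 := fun b hb =>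
      div_ne_zero (by exact_mod_cast hb.ne') hden
    rcases le_total (lam₁ n) (lam₂ n) with hcase | hcase
    · have hm1 : lam₁ n = μ := (min_eq_left hcase).symm
      rw [if_pos hm1] at hEqLim
      by_cases h2 : lam₂ n = μ
      · rw [if_pos h2] at hEqLim
        refine ⟨hm1.trans h2.symm, ?_⟩
        have := (div_left_inj' hden).mp hEqLim
        exact_mod_cast this
      · rw [if_neg h2] at hEqLim
        exact absurd hEqLim (hne _ (ha₁ n))
    · have hm2 : lam₂ n = μ := (min_eq_right hcase).symm
      rw [if_pos hm2] at hEqLim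
      by_cases h1 : lam₁ n = μ
      · rw [if_pos h1] at hEqLim
        refine ⟨h1.trans hm2.symm, ?_⟩
        have := (div_left_inj' hden).mp hEqLim
        exact_mod_cast this
      · rw [if_neg h1] at hEqLim
        exact absurd hEqLim.symm (hne _ (ha₂ n))
  exact ⟨fun k => (main k).1, fun k => (main k).2⟩
end

section
/- Let α ∈ (0,1) and λ > 0. The function z ↦ E_{α,1}(−λ z^α), where z^α is the principal branch on ℂ \ (−∞,0], is holomorphic on ℂ \ (−∞,0], and its boundary values from above and below on the negative real axis differ: for R > 0, lim_{θ→π⁻} [E_{α,1}(−λ(Re^{iθ})^α) − E_{α,1}(−λ(Re^{-iθ})^α)] = E_{α,1}(−λ R^α e^{iαπ}) − E_{α,1}(−λ R^α e^{-iαπ}), which is nonzero for small R, whereas for α = 1 this difference is identically zero. -/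
open Real Filter Complex

lemma MLaux.gamma_lb : ∃ m : ℝ, 0 < m ∧ ∀ x : ℝ, 1 ≤ x → m ≤ Real.Gamma x := by
  have hcont : ContinuousOn Real.Gamma (Set.Icc (1:ℝ) 2) := by
    intro x hx
    exact ((Real.differentiableAt_Gamma (fun m => by nlinarith [hx.1, (Nat.cast_nonneg m : (0:ℝ) ≤ m)])).continuousAt).continuousWithinAt
  obtain ⟨x₀, hx₀, hmin⟩ := (isCompact_Icc).exists_isMinOn ⟨1, by norm_num⟩ hcont
  refine ⟨Real.Gamma x₀, Real.Gamma_pos_of_pos (by linarith [hx₀.1]), ?_⟩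
  have key : ∀ n : ℕ, ∀ x : ℝ, 1 ≤ x → x ≤ n + 2 → Real.Gamma x₀ ≤ Real.Gamma x := by
    intro n
    induction n with
    | zero => intro x h1 h2; exact hmin ⟨h1, by norm_num at h2 ⊢; linarith⟩
    | succ n ih =>
      intro x h1 h2
      by_cases hle : x ≤ n + 2
      · exact ih x h1 hle
      · push_neg at hle
        have h1' : (1:ℝ) ≤ x - 1 := by push_cast at hle; linarith [(Nat.cast_nonneg n : (0:ℝ) ≤ n)]
        have h2' : x - 1 ≤ n + 2 := by push_cast at h2 ⊢; linarith
        have hIH := ih (x - 1) h1' h2'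
        have hG : Real.Gamma x = (x - 1) * Real.Gamma (x - 1) := by
          have := Real.Gamma_add_one (show x - 1 ≠ 0 by linarith)
          simpa using this
        rw [hG]
        calc Real.Gamma x₀ ≤ Real.Gamma (x - 1) := hIH
          _ ≤ (x - 1) * Real.Gamma (x - 1) :=
            le_mul_of_one_le_left (Real.Gamma_pos_of_pos (by linarith)).le h1'
  intro x hx
  exact key ⌈x⌉₊ x hx (by calc x ≤ ⌈x⌉₊ := Nat.le_ceil x
                          _ ≤ (⌈x⌉₊:ℝ) + 2 := by linarith)

lemma MLaux.gamma_ratio (α : ℝ) (hα0 : 0 < α) (hα1 : α < 1) :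
    Tendsto (fun n : ℕ => Real.Gamma ((n:ℝ)*α+1) / Real.Gamma (((n:ℝ)+1)*α+1)) atTop (nhds 0) := by
  have hb : Tendsto (fun n : ℕ => 2 ^ (1-α) * ((n:ℝ)*α+1) ^ (-α)) atTop (nhds 0) := by
    have h1 : Tendsto (fun n : ℕ => (n:ℝ)*α+1) atTop atTop :=
      tendsto_atTop_add_const_right _ 1 (tendsto_natCast_atTop_atTop.atTop_mul_const hα0)
    have h2 := (tendsto_rpow_neg_atTop hα0).comp h1
    simpa using h2.const_mul ((2:ℝ) ^ (1-α))
  apply squeeze_zero (fun n => div_nonneg (Real.Gamma_pos_of_pos (by positivity)).le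
      (Real.Gamma_pos_of_pos (by positivity)).le) _ hb
  intro n
  have hn0 : (0:ℝ) ≤ (n:ℝ)*α := mul_nonneg (Nat.cast_nonneg n) hα0.le
  set x : ℝ := (n:ℝ)*α+1 with hxdef
  have hx1 : (1:ℝ) ≤ x := by simp [hxdef]; linarith
  have hx0 : (0:ℝ) < x := by linarith
  have hxa0 : (0:ℝ) < x + α := by linarith
  have hGpos : (0:ℝ) < Real.Gamma (x + α) := Real.Gamma_pos_of_pos hxa0
  have hxa : ((n:ℝ)+1)*α+1 = x + α := by rw [hxdef]; ring
  rw [hxa]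
  -- log-convexity interpolation
  have hinterp := Real.Gamma_mul_add_mul_le_rpow_Gamma_mul_rpow_Gamma
      (show (0:ℝ) < x + α by linarith) (show (0:ℝ) < x + α + 1 by linarith)
      hα0 (show (0:ℝ) < 1 - α by linarith) (by ring)
  have harg : α * (x + α) + (1 - α) * (x + α + 1) = x + 1 := by ring
  rw [harg] at hinterp
  have hG1 : Real.Gamma (x + α + 1) = (x + α) * Real.Gamma (x + α) :=
    Real.Gamma_add_one hxa0.ne'
  have hkey : Real.Gamma (x + 1) ≤ Real.Gamma (x + α) * (x + α) ^ (1 - α) := by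
    calc Real.Gamma (x+1) ≤ Real.Gamma (x+α) ^ α * Real.Gamma (x+α+1) ^ (1-α) := hinterp
      _ = Real.Gamma (x+α) ^ α * ((x+α) ^ (1-α) * Real.Gamma (x+α) ^ (1-α)) := by
          rw [hG1, Real.mul_rpow hxa0.le hGpos.le]
      _ = (Real.Gamma (x+α) ^ α * Real.Gamma (x+α) ^ (1-α)) * (x+α) ^ (1-α) := by ring
      _ = Real.Gamma (x+α) * (x+α) ^ (1-α) := by
          rw [← Real.rpow_add hGpos]; norm_num
  have hGx1 : Real.Gamma (x + 1) = x * Real.Gamma x := Real.Gamma_add_one hx0.ne'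
  rw [hGx1] at hkey
  -- conclude
  have h2x : x + α ≤ 2 * x := by linarith
  have hstep : Real.Gamma x / Real.Gamma (x + α) ≤ (x + α) ^ (1 - α) / x := by
    rw [div_le_div_iff₀ hGpos hx0]
    nlinarith [hkey]
  refine hstep.trans ?_
  have hrp : (x + α) ^ (1 - α) ≤ (2:ℝ) ^ (1-α) * x ^ (1-α) := by
    rw [← Real.mul_rpow (by norm_num) hx0.le]
    exact Real.rpow_le_rpow hxa0.le h2x (by linarith)
  calc (x + α) ^ (1-α) / x ≤ (2:ℝ) ^ (1-α) * x ^ (1-α) / x := by gcongr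
    _ = 2 ^ (1-α) * x ^ (-α) := by
        rw [mul_div_assoc, show x ^ (1-α) / x = x ^ (1-α) / x ^ (1:ℝ) by rw [Real.rpow_one],
          ← Real.rpow_sub hx0]
        norm_num

noncomputable def mittagLeffler (α β : ℝ) (z : ℂ) : ℂ :=
  ∑' n : ℕ, z ^ n / Complex.Gamma ((n : ℂ) * (α : ℂ) + (β : ℂ))

namespace MLaux

noncomputable def mlc (α : ℝ) : ℕ → ℂ := fun n => (((Real.Gamma ((n:ℝ)*α+1) : ℝ)) : ℂ)⁻¹

lemma mlc_ne (α : ℝ) (hα0 : 0 < α) (n : ℕ) : mlc α n ≠ 0 := by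
  have : (0:ℝ) < Real.Gamma ((n:ℝ)*α+1) := Real.Gamma_pos_of_pos (by positivity)
  simp [mlc, Complex.ofReal_ne_zero, this.ne']

lemma mlc_norm (α : ℝ) (hα0 : 0 < α) (n : ℕ) :
    ‖mlc α n‖ = (Real.Gamma ((n:ℝ)*α+1))⁻¹ := by
  have : (0:ℝ) < Real.Gamma ((n:ℝ)*α+1) := Real.Gamma_pos_of_pos (by positivity)
  rw [mlc, norm_inv, Complex.norm_real, Real.norm_eq_abs, abs_of_pos this]

lemma ml_eq_sum (α : ℝ) (hα0 : 0 < α) (z : ℂ) :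
    mittagLeffler α 1 z = ∑' n : ℕ, mlc α n * z ^ n := by
  unfold mittagLeffler
  refine tsum_congr fun n => ?_
  have h : ((n : ℂ) * (α : ℂ) + ((1:ℝ) : ℂ)) = (((n:ℝ)*α+1 : ℝ) : ℂ) := by push_cast; ring
  rw [h, Complex.Gamma_ofReal, div_eq_inv_mul, mlc]

lemma radius_top (α : ℝ) (hα0 : 0 < α) (hα1 : α < 1) :
    (FormalMultilinearSeries.ofScalars ℂ (mlc α)).radius = ⊤ := by
  apply FormalMultilinearSeries.ofScalars_radius_eq_top_of_tendsto
  · exact Eventually.of_forall (mlc_ne α hα0)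
  · have h := MLaux.gamma_ratio α hα0 hα1
    refine h.congr fun n => ?_
    rw [mlc_norm α hα0, mlc_norm α hα0]
    have h1 : (0:ℝ) < Real.Gamma ((n:ℝ)*α+1) := Real.Gamma_pos_of_pos (by positivity)
    have h2 : (0:ℝ) < Real.Gamma (((n:ℝ)+1)*α+1) := Real.Gamma_pos_of_pos (by positivity)
    rw [Nat.succ_eq_add_one]
    push_cast
    field_simp

lemma ml_eq_sumfun (α : ℝ) (hα0 : 0 < α) :
    mittagLeffler α 1 = (FormalMultilinearSeries.ofScalars ℂ (mlc α)).sum := by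
  funext z
  rw [ml_eq_sum α hα0 z,
    show (FormalMultilinearSeries.ofScalars ℂ (mlc α)).sum z
      = FormalMultilinearSeries.ofScalarsSum (E := ℂ) (mlc α) z from rfl,
    FormalMultilinearSeries.ofScalars_sum_eq]
  simp [smul_eq_mul]

lemma ml_entire (α : ℝ) (hα0 : 0 < α) (hα1 : α < 1) :
    Differentiable ℂ (mittagLeffler α 1) := by
  have hrad := radius_top α hα0 hα1
  have h := (FormalMultilinearSeries.ofScalars ℂ (mlc α)).hasFPowerSeriesOnBall
      (by rw [hrad]; exact ENNReal.zero_lt_top)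
  have hdiff := h.differentiableOn
  rw [hrad] at hdiff
  rw [ml_eq_sumfun α hα0]
  intro z
  exact (hdiff z (by simp [EMetric.mem_ball, edist_lt_top z 0])).differentiableAt
    (EMetric.isOpen_ball.mem_nhds (by simp [EMetric.mem_ball, edist_lt_top z 0]))

lemma ml_summable (α : ℝ) (hα0 : 0 < α) (hα1 : α < 1) (w : ℂ) :
    Summable (fun n : ℕ => ‖mlc α n‖ * ‖w‖ ^ n) := by
  have hrad := radius_top α hα0 hα1
  have h := (FormalMultilinearSeries.ofScalars ℂ (mlc α)).summable_norm_mul_pow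
      (r := ‖w‖₊) (by rw [hrad]; exact ENNReal.coe_lt_top)
  refine h.congr fun n => ?_
  rw [FormalMultilinearSeries.ofScalars_norm]
  simp

lemma ml_summable' (α : ℝ) (hα0 : 0 < α) (hα1 : α < 1) (w : ℂ) :
    Summable (fun n : ℕ => mlc α n * w ^ n) := by
  refine Summable.of_norm ?_
  refine (ml_summable α hα0 hα1 w).congr fun n => ?_
  simp [norm_mul, norm_pow]

lemma mlc_def (α : ℝ) (n : ℕ) : mlc α n = (((Real.Gamma ((n:ℝ)*α+1) : ℝ)) : ℂ)⁻¹ := rfl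

lemma ml_conj (α : ℝ) (hα0 : 0 < α) (w : ℂ) :
    mittagLeffler α 1 ((starRingEnd ℂ) w) = (starRingEnd ℂ) (mittagLeffler α 1 w) := by
  rw [ml_eq_sum α hα0, ml_eq_sum α hα0]
  rw [show ((starRingEnd ℂ) (∑' n : ℕ, mlc α n * w ^ n))
      = star (∑' n : ℕ, mlc α n * w ^ n) from rfl, tsum_star]
  refine tsum_congr fun n => ?_
  rw [show star (mlc α n * w ^ n) = (starRingEnd ℂ) (mlc α n * w ^ n) from rfl]
  rw [map_mul, map_pow, mlc_def, map_inv₀, Complex.conj_ofReal]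

lemma jump_ne (α : ℝ) (hα0 : 0 < α) (hα1 : α < 1) :
    ∃ δ > (0:ℝ), ∀ t : ℝ, 0 < t → t < δ →
      mittagLeffler α 1 (-(t:ℂ) * Complex.exp (((α*π : ℝ) : ℂ) * Complex.I))
      - mittagLeffler α 1 (-(t:ℂ) * Complex.exp (-((α*π : ℝ) : ℂ) * Complex.I)) ≠ 0 := by
  obtain ⟨m, hm, hmle⟩ := gamma_lb
  have hs : 0 < Real.sin (α*π) :=
    Real.sin_pos_of_pos_of_lt_pi (by positivity) (by nlinarith [Real.pi_pos])
  set s := Real.sin (α*π) with hsdef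
  have hG : 0 < Real.Gamma (α+1) := Real.Gamma_pos_of_pos (by positivity)
  set G := Real.Gamma (α+1) with hGdef
  refine ⟨min (1/2) (m*s/(2*G)), lt_min (by norm_num) (by positivity), ?_⟩
  intro t ht0 htδ
  have ht2 : t ≤ 1/2 := le_of_lt ((lt_min_iff.mp htδ).1)
  have htms : t < m*s/(2*G) := (lt_min_iff.mp htδ).2
  have ht1 : t < 1 := by linarith
  set w : ℂ := -(t:ℂ) * Complex.exp (((α*π : ℝ) : ℂ) * Complex.I) with hwdef
  have hwnorm : ‖w‖ = t := by
    rw [hwdef]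
    rw [norm_mul, norm_neg, Complex.norm_real, Real.norm_eq_abs,
      Complex.norm_exp_ofReal_mul_I, abs_of_pos ht0, mul_one]
  -- imaginary parts
  have hr : ∀ n : ℕ, (0:ℝ) < Real.Gamma ((n:ℝ)*α+1) :=
    fun n => Real.Gamma_pos_of_pos (by positivity)
  set g : ℕ → ℝ := fun n => (Real.Gamma ((n:ℝ)*α+1))⁻¹ * (w^n).im with hgdef
  have hfim : ∀ n : ℕ, (mlc α n * w ^ n).im = g n := by
    intro n
    rw [mlc_def, hgdef]
    rw [show ((((Real.Gamma ((n:ℝ)*α+1) : ℝ)) : ℂ))⁻¹ = (((Real.Gamma ((n:ℝ)*α+1))⁻¹ : ℝ) : ℂ) by push_cast; ring]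
    simp [Complex.mul_im]
  have hgsum : Summable g := by
    refine Summable.of_norm_bounded (ml_summable α hα0 hα1 w) fun n => ?_
    rw [hgdef, mlc_norm α hα0, hwnorm]
    simp only [Real.norm_eq_abs, abs_mul, abs_inv, abs_of_pos (hr n)]
    gcongr
    calc |(w^n).im| ≤ ‖w^n‖ := Complex.abs_im_le_norm _
      _ = t ^ n := by rw [norm_pow, hwnorm]
  have him : (mittagLeffler α 1 w).im = ∑' n, g n := by
    rw [ml_eq_sum α hα0 w]
    rw [show (∑' n : ℕ, mlc α n * w ^ n).im = Complex.imCLM (∑' n : ℕ, mlc α n * w ^ n) from rfl]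
    rw [Complex.imCLM.map_tsum (ml_summable' α hα0 hα1 w)]
    exact tsum_congr fun n => hfim n
  -- split
  have hsplit := hgsum.sum_add_tsum_nat_add 2
  have hg0 : g 0 = 0 := by simp [hgdef]
  have hg1 : g 1 = -(t * s) / G := by
    rw [hgdef]
    simp only [pow_one, hwdef]
    rw [show -(t:ℂ) = (((-t : ℝ)) : ℂ) by push_cast; ring]
    rw [show ((((-t:ℝ)):ℂ) * Complex.exp ((((α*π : ℝ)) : ℂ) * Complex.I)).im
        = (-t) * (Complex.exp ((((α*π : ℝ)) : ℂ) * Complex.I)).im by simp [Complex.mul_im],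
      Complex.exp_ofReal_mul_I_im]
    rw [hGdef, hsdef]
    norm_num
    ring
  have hshift : Summable (fun n : ℕ => g (n+2)) := (summable_nat_add_iff 2).2 hgsum
  have hgeo : Summable (fun n : ℕ => t^n) := summable_geometric_of_lt_one ht0.le ht1
  have hsb : Summable (fun n : ℕ => (1/m) * t^(n+2)) :=
    (hgeo.mul_left ((1/m) * t^2)).congr fun n => by ring
  have hb : ∀ n : ℕ, |g (n+2)| ≤ (1/m) * t^(n+2) := by
    intro n
    set k := n + 2
    rw [hgdef]
    simp only [abs_mul, abs_inv, abs_of_pos (hr k)]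
    have h1 : (Real.Gamma ((k:ℝ)*α+1))⁻¹ ≤ 1/m := by
      rw [one_div]
      exact inv_anti₀ hm (hmle _ (by nlinarith [mul_nonneg (Nat.cast_nonneg k : (0:ℝ) ≤ (k:ℝ)) hα0.le]))
    have h2 : |(w^k).im| ≤ t^k := by
      calc |(w^k).im| ≤ ‖w^k‖ := Complex.abs_im_le_norm _
        _ = t ^ k := by rw [norm_pow, hwnorm]
    exact mul_le_mul h1 h2 (abs_nonneg _) (by positivity)
  have habs : Summable (fun n : ℕ => |g (n+2)|) := hshift.abs
  have htail : |∑' n : ℕ, g (n+2)| ≤ 2 * t^2 / m := by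
    calc |∑' n : ℕ, g (n+2)| ≤ ∑' n : ℕ, |g (n+2)| := by
          simpa [Real.norm_eq_abs] using
            norm_tsum_le_tsum_norm (f := fun n : ℕ => g (n+2))
              (by simpa [Real.norm_eq_abs] using habs)
      _ ≤ ∑' n : ℕ, (1/m) * t^(n+2) := Summable.tsum_le_tsum (fun n => hb n) habs hsb
      _ = (1/m) * t^2 * (1-t)⁻¹ := by
          rw [show (fun n : ℕ => (1/m) * t^(n+2)) = fun n : ℕ => ((1/m) * t^2) * t^n by
            funext n; ring, tsum_mul_left, tsum_geometric_of_lt_one ht0.le ht1]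
      _ ≤ (1/m) * t^2 * 2 := by
          gcongr
          rw [show (2:ℝ) = ((1:ℝ)/2)⁻¹ by norm_num]
          exact inv_anti₀ (by norm_num) (by linarith)
      _ = 2 * t^2 / m := by ring
  -- total sum negative
  have hS : (∑' n, g n) < 0 := by
    rw [← hsplit]
    have hrange : ∑ i ∈ Finset.range 2, g i = -(t*s)/G := by
      rw [Finset.sum_range_succ, Finset.sum_range_one, hg0, hg1]; ring
    rw [hrange]
    have h1 : 2 * t^2 / m < t * s / G := by
      rw [div_lt_div_iff₀ (by positivity) (by positivity)]
      have h2tG : t * (2*G) < m*s := (lt_div_iff₀ (by positivity)).1 htms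
      nlinarith [mul_lt_mul_of_pos_left h2tG ht0]
    have h2 : ∑' n : ℕ, g (n+2) ≤ 2 * t^2 / m := (le_abs_self _).trans htail
    have : -(t*s)/G + 2*t^2/m < 0 := by
      rw [neg_div]
      linarith
    linarith
  have himne : (mittagLeffler α 1 w).im ≠ 0 := by rw [him]; exact ne_of_lt hS
  have harg : -(t:ℂ) * Complex.exp (-((α*π : ℝ) : ℂ) * Complex.I) = (starRingEnd ℂ) w := by
    rw [hwdef, map_mul, map_neg, Complex.conj_ofReal, ← Complex.exp_conj, map_mul,
      Complex.conj_ofReal, Complex.conj_I]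
    ring_nf
  rw [harg, ml_conj α hα0 w, Complex.sub_conj]
  refine mul_ne_zero ?_ Complex.I_ne_zero
  rw [Complex.ofReal_ne_zero]
  intro hcon
  apply himne
  linarith [hcon]

end MLaux

/-- For `α ∈ (0,1)` and `λ > 0`, the function `z ↦ E_{α,1}(−λ zᵅ)`
(principal branch) is holomorphic on `ℂ ∖ (−∞,0]`; its boundary values from above and
below on the negative real axis differ: for `R > 0`, the difference along `θ → π⁻`
tends to `E_{α,1}(−λ Rᵅ e^{iαπ}) − E_{α,1}(−λ Rᵅ e^{−iαπ})`, which is nonzero for small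
`R`; whereas for `α = 1` this jump is identically zero. -/
theorem stmt15 (α : ℝ) (hα : α ∈ Set.Ioo (0:ℝ) 1) (lam : ℝ) (hlam : 0 < lam) :
    DifferentiableOn ℂ (fun z : ℂ => mittagLeffler α 1 (-(lam : ℂ) * z ^ (α : ℂ)))
      {z : ℂ | ¬(z.im = 0 ∧ z.re ≤ 0)}
    ∧ (∀ R : ℝ, 0 < R →
      Tendsto (fun θ : ℝ =>
          mittagLeffler α 1 (-(lam : ℂ) * ((R : ℂ) * Complex.exp (θ * Complex.I)) ^ (α : ℂ))
          - mittagLeffler α 1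
              (-(lam : ℂ) * ((R : ℂ) * Complex.exp (-θ * Complex.I)) ^ (α : ℂ)))
        (nhdsWithin π (Set.Iio π))
        (nhds (mittagLeffler α 1 (-((lam * R ^ α : ℝ) : ℂ) * Complex.exp ((α * π : ℝ) * Complex.I))
          - mittagLeffler α 1 (-((lam * R ^ α : ℝ) : ℂ) * Complex.exp (-(α * π : ℝ) * Complex.I)))))
    ∧ (∃ ε > (0:ℝ), ∀ R ∈ Set.Ioo (0:ℝ) ε,
        mittagLeffler α 1 (-((lam * R ^ α : ℝ) : ℂ) * Complex.exp ((α * π : ℝ) * Complex.I))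
          - mittagLeffler α 1 (-((lam * R ^ α : ℝ) : ℂ) * Complex.exp (-(α * π : ℝ) * Complex.I))
          ≠ 0)
    ∧ (∀ R : ℝ, 0 < R →
        mittagLeffler 1 1 (-((lam * R : ℝ) : ℂ) * Complex.exp ((π : ℝ) * Complex.I))
          - mittagLeffler 1 1 (-((lam * R : ℝ) : ℂ) * Complex.exp (-(π : ℝ) * Complex.I))
          = 0) := by
  obtain ⟨hα0, hα1⟩ := hα
  have hml := MLaux.ml_entire α hα0 hα1
  refine ⟨?_, ?_, ?_, ?_⟩
  · -- Part 1: holomorphy on the slit plane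
    intro z hz
    have hz' : 0 < z.re ∨ z.im ≠ 0 := by
      by_cases him : z.im = 0
      · left
        by_contra hre
        push_neg at hre
        exact hz ⟨him, hre⟩
      · right; exact him
    have hinner : DifferentiableAt ℂ (fun z : ℂ => -(lam : ℂ) * z ^ (α : ℂ)) z :=
      (differentiableAt_id.cpow (differentiableAt_const _) hz').const_mul _
    exact ((hml.differentiableAt.comp z hinner)).differentiableWithinAt
  · -- Part 2: boundary limit
    intro R hR
    have key : ∀ θ' : ℝ, -π < θ' → θ' ≤ π →
        ((R:ℂ) * Complex.exp ((θ':ℂ) * Complex.I)) ^ (α:ℂ)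
          = Complex.exp ((α:ℂ) * ((Real.log R : ℂ) + (θ':ℂ) * Complex.I)) := by
      intro θ' h1 h2
      have hz : (R:ℂ) * Complex.exp ((θ':ℂ) * Complex.I)
          = Complex.exp ((Real.log R : ℂ) + (θ':ℂ) * Complex.I) := by
        rw [Complex.exp_add, ← Complex.ofReal_exp, Real.exp_log hR]
      rw [hz, Complex.cpow_def_of_ne_zero (Complex.exp_ne_zero _), Complex.log_exp
        (by simpa using h1) (by simpa using h2), mul_comm]
    set F : ℝ → ℂ := fun θ =>
      mittagLeffler α 1 (-(lam:ℂ) * Complex.exp ((α:ℂ) * ((Real.log R : ℂ) + (θ:ℂ) * Complex.I)))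
      - mittagLeffler α 1
        (-(lam:ℂ) * Complex.exp ((α:ℂ) * ((Real.log R : ℂ) + (-θ:ℂ) * Complex.I))) with hF
    have hcont : Continuous F := by
      apply Continuous.sub
      · exact hml.continuous.comp (by fun_prop)
      · exact hml.continuous.comp (by fun_prop)
    have hFpi : F π =
        mittagLeffler α 1 (-((lam * R ^ α : ℝ) : ℂ) * Complex.exp ((α * π : ℝ) * Complex.I))
        - mittagLeffler α 1 (-((lam * R ^ α : ℝ) : ℂ) * Complex.exp (-(α * π : ℝ) * Complex.I)) := by
      rw [hF]
      have e1 : (α:ℂ) * ((Real.log R : ℂ) + ((π:ℝ):ℂ) * Complex.I)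
          = ((Real.log R * α : ℝ):ℂ) + ((α*π : ℝ):ℂ) * Complex.I := by push_cast; ring
      have e2 : (α:ℂ) * ((Real.log R : ℂ) + (-(π:ℝ):ℂ) * Complex.I)
          = ((Real.log R * α : ℝ):ℂ) + (-(α*π : ℝ):ℂ) * Complex.I := by push_cast; ring
      simp only [Complex.ofReal_neg]
      rw [e1, e2, Complex.exp_add, Complex.exp_add, ← Complex.ofReal_exp,
        ← Real.rpow_def_of_pos hR]
      congr 1
      · congr 1
        push_cast
        ring
      · congr 1
        push_cast
        ring
    have hT : Tendsto F (nhdsWithin π (Set.Iio π)) (nhds (F π)) :=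
      (hcont.tendsto π).mono_left nhdsWithin_le_nhds
    rw [hFpi] at hT
    refine Tendsto.congr' ?_ hT
    filter_upwards [mem_nhdsWithin_of_mem_nhds (Ioi_mem_nhds Real.pi_pos), self_mem_nhdsWithin]
      with θ h0 hπ
    have h0' : (0:ℝ) < θ := h0
    have hπ' : θ < π := hπ
    rw [hF]
    have k1 := key θ (by linarith) hπ'.le
    have k2 := key (-θ) (by linarith) (by linarith)
    simp only []
    rw [← k1, show ((-θ : ℝ):ℂ) = -(θ:ℂ) by push_cast; ring] at *
    rw [← k2]
  · -- Part 3: jump is nonzero for small R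
    obtain ⟨δ, hδ, hjump⟩ := MLaux.jump_ne α hα0 hα1
    refine ⟨(δ/lam) ^ (1/α), Real.rpow_pos_of_pos (by positivity) _, ?_⟩
    intro R hRmem
    obtain ⟨hR0, hRε⟩ := hRmem
    have ht0 : 0 < lam * R ^ α := mul_pos hlam (Real.rpow_pos_of_pos hR0 α)
    have htδ : lam * R ^ α < δ := by
      have h1 : R ^ α < ((δ/lam) ^ (1/α)) ^ α := Real.rpow_lt_rpow hR0.le hRε hα0
      rw [← Real.rpow_mul (by positivity), one_div, inv_mul_cancel₀ hα0.ne', Real.rpow_one] at h1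
      calc lam * R ^ α < lam * (δ/lam) := by exact mul_lt_mul_of_pos_left h1 hlam
        _ = δ := by field_simp
    exact hjump (lam * R ^ α) ht0 htδ
  · -- Part 4: no jump for α = 1
    intro R hR
    have ha : Complex.exp (((π:ℝ):ℂ) * Complex.I) = -1 := Complex.exp_pi_mul_I
    have hb : Complex.exp (-((π:ℝ):ℂ) * Complex.I) = -1 := by
      rw [neg_mul, Complex.exp_neg, Complex.exp_pi_mul_I]
      norm_num
    rw [ha, hb, sub_self]
end
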